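/- Let p be a positive integer, S ⊆ {1,…,p}, and let L : ℝ^p → ℝ be twice continuously differentiable. Let ρ : ℝ → ℝ be μ-amenable for some μ ≥ 0 and λ > 0, set q(t) := λ|t| − ρ(t) and ∇q(β) := (q'(β_j))_{j=1}^p. Let β*, β̂ ∈ ℝ^p with supp(β*) ⊆ S and supp(β̂) ⊆ S, and suppose ∇L(β̂) − ∇q(β̂) + λẑ = 0 for some ẑ ∈ ℝ^p with ẑ_S ∈ ∂‖β̂_S‖₁. Define the matrix Q̂ := ∫₀¹ ∇²L(β* + t(β̂ − β*)) dt and suppose the submatrix Q̂_{SS} (rows and columns indexed by S) is invertible. Then ‖β̂ − β*‖_∞ ≤ ‖(Q̂_{SS})^{−1}(∇L(β*))_S‖_∞ + λ·|||(Q̂_{SS})^{−1}|||_∞. -/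

import Mathlib

open scoped BigOperators

/-- A function `ρ : ℝ → ℝ` is `μ`-amenable (with selection parameter `lam > 0`):
(i) symmetric around zero with `ρ 0 = 0`; (ii) nondecreasing on `[0, ∞)`;
(iii) `t ↦ ρ t / t` nonincreasing on `(0, ∞)`; (iv) differentiable away from `0`;
(v) `t ↦ ρ t + μ/2 t²` convex; (vi) `ρ'(t) → lam` as `t → 0⁺`. -/
structure Amenable (lam mu : ℝ) (ρ : ℝ → ℝ) : Prop where
  symm : ∀ t : ℝ, ρ (-t) = ρ t
  zero : ρ 0 = 0
  mono : MonotoneOn ρ (Set.Ici (0 : ℝ))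
  ratio : AntitoneOn (fun t => ρ t / t) (Set.Ioi (0 : ℝ))
  diff : ∀ t : ℝ, t ≠ 0 → DifferentiableAt ℝ ρ t
  conv : ConvexOn ℝ Set.univ (fun t => ρ t + mu / 2 * t ^ 2)
  deriv_lim : Filter.Tendsto (deriv ρ) (nhdsWithin 0 (Set.Ioi 0)) (nhds lam)


open scoped RealInnerProductSpace

/-- The ℓ₁-norm on `ℝ^p`. -/
noncomputable def norm1 {p : ℕ} (x : EuclideanSpace ℝ (Fin p)) : ℝ := ∑ j, |x j|

/-- The ℓ_∞-norm on `ℝ^p`. -/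
noncomputable def normInf {p : ℕ} (x : EuclideanSpace ℝ (Fin p)) : ℝ := ⨆ j, |x j|

/-- The subdifferential of the ℓ₁-norm at `x`: vectors `v` with `‖v‖_∞ ≤ 1` and
`⟨v, x⟩ = ‖x‖₁`. -/
def l1Subdiff {m : Type*} [Fintype m] (x : m → ℝ) : Set (m → ℝ) :=
  {v | (∀ j, |v j| ≤ 1) ∧ ∑ j, v j * x j = ∑ j, |x j|}

/-- The `(α, τ)`-RSC condition for a loss `L` with parameters `α₁, α₂, τ₁, τ₂` (and `n`, `p`). -/
def RSCCond (p n : ℕ) (α₁ α₂ τ₁ τ₂ : ℝ) (L : EuclideanSpace ℝ (Fin p) → ℝ) : Prop :=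
  ∀ β Δ : EuclideanSpace ℝ (Fin p),
    (‖Δ‖ ≤ 1 → α₁ * ‖Δ‖ ^ 2 - τ₁ * (Real.log p / n) * (norm1 Δ) ^ 2 ≤
      ⟪gradient L (β + Δ) - gradient L β, Δ⟫) ∧
    (1 ≤ ‖Δ‖ → α₂ * ‖Δ‖ - τ₂ * Real.sqrt (Real.log p / n) * norm1 Δ ≤
      ⟪gradient L (β + Δ) - gradient L β, Δ⟫)

/-- The derivative of `q(t) = λ|t| − ρ(t)`. -/
noncomputable def qDeriv (lam : ℝ) (ρ : ℝ → ℝ) (t : ℝ) : ℝ :=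
  deriv (fun u => lam * |u| - ρ u) t

/-- `βt` is a stationary point of the program `min_{‖β‖₁ ≤ R} L β + Σⱼ ρ(βⱼ)`:
`‖βt‖₁ ≤ R` and there is `z ∈ ∂‖βt‖₁` with
`⟨∇L(βt) − ∇q(βt) + λ z, β − βt⟩ ≥ 0` for all feasible `β`. -/
def IsStationaryPt {p : ℕ} (L : EuclideanSpace ℝ (Fin p) → ℝ) (ρ : ℝ → ℝ) (lam R : ℝ)
    (βt : EuclideanSpace ℝ (Fin p)) : Prop :=
  norm1 βt ≤ R ∧ ∃ z : Fin p → ℝ, z ∈ l1Subdiff (fun j => βt j) ∧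
    ∀ β : EuclideanSpace ℝ (Fin p), norm1 β ≤ R →
      0 ≤ ∑ j, (gradient L βt j - qDeriv lam ρ (βt j) + lam * z j) * (β j - βt j)

/-- The Hessian matrix `∇²L(β)` of `L` at `β`. -/
noncomputable def hess {p : ℕ} (L : EuclideanSpace ℝ (Fin p) → ℝ)
    (β : EuclideanSpace ℝ (Fin p)) : Matrix (Fin p) (Fin p) ℝ :=
  fun i j => iteratedFDeriv ℝ 2 L β ![EuclideanSpace.single i 1, EuclideanSpace.single j 1]

/-- The averaged Hessian `Q̂ = ∫₀¹ ∇²L(β* + t(β̂ − β*)) dt`. -/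
noncomputable def Qhat {p : ℕ} (L : EuclideanSpace ℝ (Fin p) → ℝ)
    (βstar βhat : EuclideanSpace ℝ (Fin p)) : Matrix (Fin p) (Fin p) ℝ :=
  fun i j => ∫ t in (0 : ℝ)..1, hess L (βstar + t • (βhat - βstar)) i j

/-- The submatrix `M_{SS}` with rows and columns indexed by `S`. -/
def subSS {p : ℕ} (M : Matrix (Fin p) (Fin p) ℝ) (S : Finset (Fin p)) :
    Matrix {j // j ∈ S} {j // j ∈ S} ℝ :=
  fun i j => M i j

/-- The vector ℓ_∞-norm of a finitely indexed family. -/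
noncomputable def vecInf {m : Type*} [Fintype m] (x : m → ℝ) : ℝ := ⨆ i, |x i|

/-- The ℓ_∞-operator norm of a matrix: the maximum absolute row sum. -/
noncomputable def matInf {m n : Type*} [Fintype m] [Fintype n] (M : Matrix m n ℝ) : ℝ :=
  ⨆ i, ∑ j, |M i j|


section EIBAux

variable {lam mu : ℝ} {ρ : ℝ → ℝ}

lemma EIB.Amenable.cont (hρ : Amenable lam mu ρ) : Continuous ρ := by
  have h := hρ.conv.continuousOn isOpen_univ
  have : Continuous (fun t : ℝ => ρ t + mu / 2 * t ^ 2) :=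
    continuousOn_univ.1 h
  have h2 : Continuous (fun t : ℝ => (ρ t + mu / 2 * t ^ 2) - mu / 2 * t ^ 2) :=
    this.sub (by continuity)
  simpa using h2

lemma EIB.Amenable.deriv_odd (hρ : Amenable lam mu ρ) (t : ℝ) :
    deriv ρ (-t) = -deriv ρ t := by
  have : (fun x : ℝ => ρ (-x)) = ρ := funext hρ.symm
  have h := deriv_comp_neg (f := ρ) (x := t)
  rw [this] at h
  linarith

lemma EIB.Amenable.deriv_nonneg (hρ : Amenable lam mu ρ) {t : ℝ} (ht : 0 < t) :
    0 ≤ deriv ρ t := by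
  have hd := (hρ.diff t ht.ne').hasDerivAt
  rw [hasDerivAt_iff_tendsto_slope] at hd
  have hd' : Filter.Tendsto (slope ρ t) (nhdsWithin t (Set.Ioi t)) (nhds (deriv ρ t)) :=
    hd.mono_left (nhdsWithin_mono _ (fun x hx => ne_of_gt hx))
  refine ge_of_tendsto hd' ?_
  filter_upwards [self_mem_nhdsWithin] with s hs
  have hs' : t < s := hs
  have : ρ t ≤ ρ s := hρ.mono (Set.mem_Ici.2 ht.le) (Set.mem_Ici.2 (ht.trans hs').le) hs'.le
  have h2 : 0 < s - t := by linarith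
  rw [slope_def_field]
  exact div_nonneg (by linarith) h2.le

lemma EIB.Amenable.deriv_le_ratio (hρ : Amenable lam mu ρ) {t : ℝ} (ht : 0 < t) :
    deriv ρ t ≤ ρ t / t := by
  have hd := (hρ.diff t ht.ne').hasDerivAt
  rw [hasDerivAt_iff_tendsto_slope] at hd
  have hd' : Filter.Tendsto (slope ρ t) (nhdsWithin t (Set.Ioi t)) (nhds (deriv ρ t)) :=
    hd.mono_left (nhdsWithin_mono _ (fun x hx => ne_of_gt hx))
  refine le_of_tendsto hd' ?_
  filter_upwards [self_mem_nhdsWithin] with s hs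
  have hs' : t < s := hs
  have hst : 0 < s := ht.trans hs'
  have hr : ρ s / s ≤ ρ t / t := hρ.ratio (Set.mem_Ioi.2 ht) (Set.mem_Ioi.2 hst) hs'.le
  have h2 : 0 < s - t := by linarith
  rw [slope_def_field, div_le_iff₀ h2]
  have h3 : ρ s ≤ s * (ρ t / t) := by
    rw [div_le_div_iff₀ hst ht] at hr
    rw [mul_div_assoc', mul_comm s, le_div_iff₀ ht]
    linarith [hr]
  have htt : t * (ρ t / t) = ρ t := by field_simp
  nlinarith [h3]

lemma EIB.Amenable.ratio_le (hρ : Amenable lam mu ρ) {t : ℝ} (ht : 0 < t) :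
    ρ t / t ≤ lam := by
  refine le_of_forall_pos_le_add (fun ε hε => ?_)
  have := hρ.deriv_lim
  rw [Metric.tendsto_nhdsWithin_nhds] at this
  obtain ⟨δ, hδ, hδ'⟩ := this ε hε
  set s := min t (δ/2) with hs
  have hs0 : 0 < s := lt_min ht (by linarith)
  obtain ⟨c, hc, hceq⟩ := exists_hasDerivAt_eq_slope ρ (deriv ρ) hs0
    (EIB.Amenable.cont hρ).continuousOn
    (fun x hx => (hρ.diff x (ne_of_gt hx.1)).hasDerivAt)
  have hc1 : c ∈ Set.Ioi (0:ℝ) := Set.mem_Ioi.2 hc.1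
  have hcd : dist c 0 < δ := by
    rw [Real.dist_eq, sub_zero, abs_of_pos hc.1]
    have h4 : s ≤ δ/2 := min_le_right _ _
    linarith [hc.2]
  have hder : dist (deriv ρ c) lam < ε := hδ' hc1 hcd
  have h1 : deriv ρ c = ρ s / s := by rw [hceq, hρ.zero]; ring_nf
  have h2 : ρ t / t ≤ ρ s / s := hρ.ratio (Set.mem_Ioi.2 hs0) (Set.mem_Ioi.2 ht) (min_le_left _ _)
  rw [Real.dist_eq] at hder
  have := abs_lt.1 hder
  linarith [this.1, this.2, h2, h1.le]

lemma EIB.Amenable.deriv_mem (hρ : Amenable lam mu ρ) {t : ℝ} (ht : 0 < t) :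
    0 ≤ deriv ρ t ∧ deriv ρ t ≤ lam :=
  ⟨EIB.Amenable.deriv_nonneg hρ ht,
    (EIB.Amenable.deriv_le_ratio hρ ht).trans (EIB.Amenable.ratio_le hρ ht)⟩

lemma EIB.qDeriv_zero (hρ : Amenable lam mu ρ) (lam : ℝ) : qDeriv lam ρ 0 = 0 := by
  set q : ℝ → ℝ := fun u => lam * |u| - ρ u with hq
  have heven : (fun x : ℝ => q (-x)) = q := by
    funext x; simp [hq, hρ.symm, abs_neg]
  have h := deriv_comp_neg (f := q) (x := (0:ℝ))
  rw [heven, neg_zero] at h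
  have : deriv q 0 = 0 := by linarith
  simpa [qDeriv] using this

lemma EIB.qDeriv_pos (hρ : Amenable lam mu ρ) {t : ℝ} (ht : 0 < t) :
    qDeriv lam ρ t = lam - deriv ρ t := by
  have hev : (fun u : ℝ => lam * |u| - ρ u) =ᶠ[nhds t] (fun u => lam * u - ρ u) := by
    filter_upwards [Ioi_mem_nhds ht] with u hu
    rw [abs_of_pos hu]
  rw [qDeriv, hev.deriv_eq]
  rw [deriv_fun_sub (by fun_prop) (hρ.diff t ht.ne')]
  congr 1
  have : HMul.hMul lam = fun u : ℝ => lam * u := rfl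
  rw [this, deriv_const_mul_field]
  simp

lemma EIB.qDeriv_neg' (hρ : Amenable lam mu ρ) {t : ℝ} (ht : t < 0) :
    qDeriv lam ρ t = -lam - deriv ρ t := by
  have hev : (fun u : ℝ => lam * |u| - ρ u) =ᶠ[nhds t] (fun u => lam * (-u) - ρ u) := by
    filter_upwards [Iio_mem_nhds ht] with u hu
    rw [abs_of_neg hu]
  rw [qDeriv, hev.deriv_eq]
  rw [deriv_fun_sub (by fun_prop) (hρ.diff t ht.ne)]
  congr 1
  have : (fun u : ℝ => lam * (-u)) = fun u : ℝ => -lam * u := by funext u; ring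
  rw [this, deriv_const_mul_field]
  simp

lemma EIB.qDeriv_bound (hρ : Amenable lam mu ρ) {t z : ℝ}
    (hz1 : |z| ≤ 1) (hzt : z * t = |t|) : |qDeriv lam ρ t - lam * z| ≤ lam := by
  have hlam : 0 ≤ lam := by
    have := abs_nonneg z
    have h1 := (abs_le.1 hz1).1
    nlinarith [EIB.Amenable.ratio_le hρ (show (0:ℝ) < 1 by norm_num),
      EIB.Amenable.deriv_nonneg hρ (show (0:ℝ) < 1 by norm_num),
      EIB.Amenable.deriv_le_ratio hρ (show (0:ℝ) < 1 by norm_num)]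
  rcases lt_trichotomy t 0 with ht | ht | ht
  · have hz : z = -1 := by
      have h5 : z * t = -t := by rw [hzt, abs_of_neg ht]
      exact mul_right_cancel₀ ht.ne (by linarith [h5] : z * t = (-1) * t)
    rw [EIB.qDeriv_neg' hρ ht, hz]
    have h1 := EIB.Amenable.deriv_odd hρ (-t)
    rw [neg_neg] at h1
    have h2 := EIB.Amenable.deriv_mem hρ (by linarith : (0:ℝ) < -t)
    rw [abs_le]; constructor <;> nlinarith [h1, h2.1, h2.2]
  · subst ht
    rw [EIB.qDeriv_zero hρ lam]
    rw [abs_le] at hz1 ⊢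
    constructor <;> nlinarith [hz1.1, hz1.2]
  · have hz : z = 1 := by
      have h5 : z * t = t := by rw [hzt, abs_of_pos ht]
      exact mul_right_cancel₀ ht.ne' (by linarith [h5] : z * t = 1 * t)
    rw [EIB.qDeriv_pos hρ ht, hz]
    have h2 := EIB.Amenable.deriv_mem hρ ht
    rw [abs_le]; constructor <;> nlinarith [h2.1, h2.2]

lemma EIB.l1Subdiff_eq {m : Type*} [Fintype m] {x v : m → ℝ} (hv : v ∈ l1Subdiff x) (j : m) :
    v j * x j = |x j| := by
  have h := hv.2
  by_contra hne
  have hle : ∀ i, v i * x i ≤ |x i| := fun i => by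
    calc v i * x i ≤ |v i * x i| := le_abs_self _
    _ = |v i| * |x i| := abs_mul _ _
    _ ≤ 1 * |x i| := mul_le_mul_of_nonneg_right (hv.1 i) (abs_nonneg _)
    _ = |x i| := one_mul _
  have hlt : v j * x j < |x j| := lt_of_le_of_ne (hle j) hne
  have := Finset.sum_lt_sum (fun i (_ : i ∈ Finset.univ) => hle i)
    ⟨j, Finset.mem_univ j, hlt⟩
  linarith [h]

lemma EIB.gradient_apply_eq {p : ℕ} (L : EuclideanSpace ℝ (Fin p) → ℝ)
    (x : EuclideanSpace ℝ (Fin p)) (i : Fin p) :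
    gradient L x i = fderiv ℝ L x (EuclideanSpace.single i 1) := by
  have h1 : gradient L x i = ⟪EuclideanSpace.single i (1:ℝ), gradient L x⟫ := by
    rw [EuclideanSpace.inner_single_left]; simp
  rw [h1, real_inner_comm, gradient, InnerProductSpace.toDual_symm_apply]

lemma EIB.hess_eq {p : ℕ} (L : EuclideanSpace ℝ (Fin p) → ℝ) (β : EuclideanSpace ℝ (Fin p))
    (i j : Fin p) :
    hess L β i j = fderiv ℝ (fderiv ℝ L) β (EuclideanSpace.single i 1)
      (EuclideanSpace.single j 1) := by
  rw [hess, iteratedFDeriv_two_apply]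
  simp

lemma EIB.sum_single_eq {p : ℕ} (x : EuclideanSpace ℝ (Fin p)) :
    (∑ j, x j • EuclideanSpace.single j (1:ℝ)) = x := by
  ext k
  rw [WithLp.ofLp_sum, Finset.sum_apply]
  simp only [PiLp.smul_apply, EuclideanSpace.single_apply, smul_eq_mul]
  simp [Finset.sum_ite_eq]

lemma EIB.grad_sub_eq {p : ℕ} (L : EuclideanSpace ℝ (Fin p) → ℝ) (hL : ContDiff ℝ 2 L)
    (a b : EuclideanSpace ℝ (Fin p)) (i : Fin p) :
    gradient L b i - gradient L a i = ∑ j, Qhat L a b i j * (b - a) j := by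
  set Δ : EuclideanSpace ℝ (Fin p) := b - a with hΔ
  set γ : ℝ → EuclideanSpace ℝ (Fin p) := fun t => a + t • Δ with hγ
  have hF : ContDiff ℝ 1 (fderiv ℝ L) := hL.fderiv_right (le_refl _)
  have hγc : Continuous γ := by fun_prop
  have hγd : ∀ t : ℝ, HasDerivAt γ Δ t := fun t => by
    simpa [hγ] using ((hasDerivAt_id t).smul_const Δ).const_add a
  have key : ∀ t : ℝ, HasDerivAt (fun s => fderiv ℝ L (γ s) (EuclideanSpace.single i 1))
      (fderiv ℝ (fderiv ℝ L) (γ t) Δ (EuclideanSpace.single i 1)) t := by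
    intro t
    have h1 : HasFDerivAt (fderiv ℝ L) (fderiv ℝ (fderiv ℝ L) (γ t)) (γ t) :=
      (hF.differentiable one_ne_zero (γ t)).hasFDerivAt
    have h2 : HasDerivAt (fun s => fderiv ℝ L (γ s)) (fderiv ℝ (fderiv ℝ L) (γ t) Δ) t :=
      h1.comp_hasDerivAt t (hγd t)
    simpa using h2.clm_apply (hasDerivAt_const t (EuclideanSpace.single i 1))
  have hcont : Continuous (fun t => fderiv ℝ (fderiv ℝ L) (γ t) Δ (EuclideanSpace.single i 1)) := by
    have hc2 : Continuous (fderiv ℝ (fderiv ℝ L)) := hF.continuous_fderiv one_ne_zero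
    have : Continuous (fun t => fderiv ℝ (fderiv ℝ L) (γ t)) := hc2.comp hγc
    exact (this.clm_apply continuous_const).clm_apply continuous_const
  have hFTC := intervalIntegral.integral_eq_sub_of_hasDerivAt
    (f := fun s => fderiv ℝ L (γ s) (EuclideanSpace.single i 1))
    (f' := fun t => fderiv ℝ (fderiv ℝ L) (γ t) Δ (EuclideanSpace.single i 1))
    (a := 0) (b := 1) (fun t _ => key t) (hcont.intervalIntegrable 0 1)
  have hγ1 : γ 1 = b := by simp [hγ, hΔ]
  have hγ0 : γ 0 = a := by simp [hγ]
  simp only [hγ1, hγ0] at hFTC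
  rw [EIB.gradient_apply_eq, EIB.gradient_apply_eq, ← hFTC]
  have hsymm : ∀ t : ℝ, fderiv ℝ (fderiv ℝ L) (γ t) Δ (EuclideanSpace.single i 1)
      = ∑ j, hess L (γ t) i j * Δ j := by
    intro t
    have hs : IsSymmSndFDerivAt ℝ L (γ t) :=
      hL.contDiffAt.isSymmSndFDerivAt (by norm_num)
    rw [hs Δ (EuclideanSpace.single i 1)]
    conv_lhs => rw [← EIB.sum_single_eq Δ]
    rw [map_sum]
    simp only [map_smul]
    refine Finset.sum_congr rfl (fun j _ => ?_)
    rw [EIB.hess_eq]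
    simp [mul_comm]
  have : (∫ t in (0:ℝ)..1, fderiv ℝ (fderiv ℝ L) (γ t) Δ (EuclideanSpace.single i 1))
      = ∑ j, Qhat L a b i j * Δ j := by
    rw [intervalIntegral.integral_congr (fun t _ => hsymm t)]
    rw [intervalIntegral.integral_finset_sum]
    · congr 1
      funext j
      rw [Qhat, ← intervalIntegral.integral_mul_const]
    · intro j _
      apply Continuous.intervalIntegrable
      have hhc : Continuous (fun t => hess L (γ t) i j) := by
        simp only [EIB.hess_eq]
        have hc2 : Continuous (fderiv ℝ (fderiv ℝ L)) := hF.continuous_fderiv one_ne_zero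
        exact (((hc2.comp hγc).clm_apply continuous_const).clm_apply continuous_const)
      exact hhc.mul continuous_const
  rw [this]

lemma EIB.le_vecInf {m : Type*} [Fintype m] (x : m → ℝ) (i : m) : |x i| ≤ vecInf x := by
  exact le_ciSup (Set.Finite.bddAbove (Set.finite_range (fun i => |x i|))) i

lemma EIB.vecInf_nonneg {m : Type*} [Fintype m] (x : m → ℝ) : 0 ≤ vecInf x :=
  Real.iSup_nonneg (fun i => abs_nonneg _)

lemma EIB.le_matInf {m n : Type*} [Fintype m] [Fintype n] (M : Matrix m n ℝ) (i : m) :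
    ∑ j, |M i j| ≤ matInf M :=
  le_ciSup (Set.Finite.bddAbove (Set.finite_range (fun i => ∑ j, |M i j|))) i

lemma EIB.matInf_nonneg {m n : Type*} [Fintype m] [Fintype n] (M : Matrix m n ℝ) :
    0 ≤ matInf M :=
  Real.iSup_nonneg (fun i => Finset.sum_nonneg (fun j _ => abs_nonneg _))

end EIBAux

/-- ℓ_∞-bound on `β̂ − β*` via the averaged Hessian.  If `β*, β̂` are supported
on `S`, the zero-subgradient condition holds at `β̂`, and `Q̂_{SS}` is invertible, then
`‖β̂ − β*‖_∞ ≤ ‖(Q̂_{SS})⁻¹ (∇L(β*))_S‖_∞ + λ |||(Q̂_{SS})⁻¹|||_∞`. -/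
theorem ell_inf_bound (p : ℕ) (hp : 0 < p) (S : Finset (Fin p))
    (L : EuclideanSpace ℝ (Fin p) → ℝ) (hL : ContDiff ℝ 2 L)
    (ρ : ℝ → ℝ) (lam mu : ℝ) (hlam : 0 < lam) (hmu : 0 ≤ mu) (hρ : Amenable lam mu ρ)
    (βstar βhat : EuclideanSpace ℝ (Fin p))
    (hβstarS : ∀ j, βstar j ≠ 0 → j ∈ S) (hβhatS : ∀ j, βhat j ≠ 0 → j ∈ S)
    (zhat : Fin p → ℝ)
    (hzero : ∀ j, gradient L βhat j - qDeriv lam ρ (βhat j) + lam * zhat j = 0)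
    (hzS : (fun j : {j // j ∈ S} => zhat j) ∈ l1Subdiff (fun j : {j // j ∈ S} => βhat j))
    (hinv : IsUnit (subSS (Qhat L βstar βhat) S).det) :
    normInf (βhat - βstar) ≤
      vecInf ((subSS (Qhat L βstar βhat) S)⁻¹.mulVec
          (fun j : {j // j ∈ S} => gradient L βstar j)) +
        lam * matInf (subSS (Qhat L βstar βhat) S)⁻¹ := by
  classical
  set A := subSS (Qhat L βstar βhat) S with hA
  set Δ : EuclideanSpace ℝ (Fin p) := βhat - βstar with hΔdef
  have hΔ0 : ∀ j : Fin p, j ∉ S → Δ j = 0 := by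
    intro j hj
    have h1 : βhat j = 0 := by by_contra h; exact hj (hβhatS j h)
    have h2 : βstar j = 0 := by by_contra h; exact hj (hβstarS j h)
    simp [hΔdef, h1, h2]
  -- the key identity: A ⬝ᵥ Δ_S = (∇L(βhat) - ∇L(βstar))_S
  have hmv : A.mulVec (fun j : {j // j ∈ S} => Δ (j : Fin p)) =
      fun i : {j // j ∈ S} => gradient L βhat i - gradient L βstar i := by
    funext i
    rw [Matrix.mulVec, dotProduct]
    have h1 := EIB.grad_sub_eq L hL βstar βhat i
    rw [h1]
    have h2 : ∑ j : Fin p, Qhat L βstar βhat i j * Δ j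
        = ∑ j ∈ S, Qhat L βstar βhat i j * Δ j := by
      refine (Finset.sum_subset (S.subset_univ) ?_).symm
      intro j _ hj
      rw [hΔ0 j hj, mul_zero]
    rw [h2, ← Finset.sum_coe_sort S (fun j => Qhat L βstar βhat i j * Δ j)]
    rfl
  have hΔS : (fun j : {j // j ∈ S} => Δ (j : Fin p)) =
      A⁻¹.mulVec (fun i : {j // j ∈ S} => gradient L βhat i - gradient L βstar i) := by
    rw [← hmv, Matrix.mulVec_mulVec, Matrix.nonsing_inv_mul A hinv, Matrix.one_mulVec]
  -- bound each coordinate in S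
  have hcoord : ∀ i : {j // j ∈ S}, |Δ (i : Fin p)| ≤
      vecInf (A⁻¹.mulVec (fun j : {j // j ∈ S} => gradient L βstar j)) + lam * matInf A⁻¹ := by
    intro i
    have h3 : Δ (i : Fin p) =
        (∑ j : {j // j ∈ S}, A⁻¹ i j * (qDeriv lam ρ (βhat j) - lam * zhat j))
          - A⁻¹.mulVec (fun j : {j // j ∈ S} => gradient L βstar j) i := by
      have := congrFun hΔS i
      rw [this, Matrix.mulVec, dotProduct, Matrix.mulVec, dotProduct, ← Finset.sum_sub_distrib]
      refine Finset.sum_congr rfl (fun j _ => ?_)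
      have hz := hzero (j : Fin p)
      have hgj : gradient L βhat (j : Fin p) = qDeriv lam ρ (βhat (j : Fin p)) - lam * zhat j := by
        linarith [hz]
      rw [hgj]; ring
    rw [h3]
    have hwb : ∀ j : {j // j ∈ S}, |qDeriv lam ρ (βhat (j : Fin p)) - lam * zhat j| ≤ lam := by
      intro j
      exact EIB.qDeriv_bound hρ (hzS.1 j) (EIB.l1Subdiff_eq hzS j)
    calc |(∑ j : {j // j ∈ S}, A⁻¹ i j * (qDeriv lam ρ (βhat j) - lam * zhat j))
          - A⁻¹.mulVec (fun j : {j // j ∈ S} => gradient L βstar j) i|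
        ≤ |A⁻¹.mulVec (fun j : {j // j ∈ S} => gradient L βstar j) i|
          + |∑ j : {j // j ∈ S}, A⁻¹ i j * (qDeriv lam ρ (βhat j) - lam * zhat j)| := by
          rw [abs_sub_comm]; exact abs_sub _ _
      _ ≤ vecInf (A⁻¹.mulVec (fun j : {j // j ∈ S} => gradient L βstar j)) + lam * matInf A⁻¹ := by
          gcongr
          · exact EIB.le_vecInf _ i
          · calc |∑ j : {j // j ∈ S}, A⁻¹ i j * (qDeriv lam ρ (βhat j) - lam * zhat j)|
                ≤ ∑ j : {j // j ∈ S}, |A⁻¹ i j * (qDeriv lam ρ (βhat j) - lam * zhat j)| :=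
                  Finset.abs_sum_le_sum_abs _ _
              _ ≤ ∑ j : {j // j ∈ S}, |A⁻¹ i j| * lam := by
                  refine Finset.sum_le_sum (fun j _ => ?_)
                  rw [abs_mul]
                  exact mul_le_mul_of_nonneg_left (hwb j) (abs_nonneg _)
              _ = lam * ∑ j : {j // j ∈ S}, |A⁻¹ i j| := by rw [Finset.mul_sum]; exact Finset.sum_congr rfl (fun j _ => mul_comm _ _)
              _ ≤ lam * matInf A⁻¹ :=
                  mul_le_mul_of_nonneg_left (EIB.le_matInf _ i) hlam.le
  -- conclude
  have hne : Nonempty (Fin p) := ⟨⟨0, hp⟩⟩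
  rw [normInf]
  refine ciSup_le (fun i => ?_)
  by_cases hi : i ∈ S
  · exact hcoord ⟨i, hi⟩
  · rw [hΔ0 i hi, abs_zero]
    have h1 := EIB.vecInf_nonneg (A⁻¹.mulVec (fun j : {j // j ∈ S} => gradient L βstar j))
    have h2 := EIB.matInf_nonneg (A⁻¹ : Matrix {j // j ∈ S} {j // j ∈ S} ℝ)
    nlinarith [h1, h2, hlam.le]
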